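/- arXiv:1505.02804 — 3 statements merged into one kernel-verified Lean document; each statement's English description precedes it below -/
import Mathlib

section
/- For any fixed integer k ≥ 1, the map λ ↦ λ f_{k-1}(λ)/f_k(λ) is a strictly increasing bijection from (0,∞) onto (k,∞). -/
open MeasureTheory Filter Finset

/-- Poisson tail: `pf t l = e^{-l} * sum_{i >= t} l^i / i!`. -/
noncomputable def pf (t : ℕ) (l : ℝ) : ℝ :=
  Real.exp (-l) * ∑' i : ℕ, if t ≤ i then l ^ i / (Nat.factorial i) else 0

namespace Stmt3Aux

noncomputable def c (k j : ℕ) : ℝ := (Nat.factorial k : ℝ) / (Nat.factorial (k + j))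

noncomputable def S (k : ℕ) (l : ℝ) : ℝ := ∑' j : ℕ, c k j * l ^ j

lemma c_pos (k j : ℕ) : 0 < c k j := by unfold c; positivity

lemma c_zero (k : ℕ) : c k 0 = 1 := by
  rw [c]; simp [Nat.factorial_ne_zero]

lemma c_le (k j : ℕ) : c k j ≤ 1 / (Nat.factorial j) := by
  rw [c, div_le_div_iff₀ (by positivity) (by positivity), one_mul]
  exact_mod_cast Nat.le_of_dvd (Nat.factorial_pos _)
    (Nat.factorial_mul_factorial_dvd_factorial_add k j)

lemma fact_key (k a b : ℕ) :
    (k + 1) * (Nat.factorial (k + a) * Nat.factorial (k + b)) ≤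
      Nat.factorial k * Nat.factorial (k + a + b + 1) := by
  have h1 : Nat.factorial (k + a) * Nat.factorial (k + b) ≤
      Nat.factorial k * Nat.factorial (k + a + b) := by
    have hc : (k + b).choose b ≤ (k + a + b).choose b :=
      Nat.choose_le_choose b (by omega)
    have e1 : (k + b).choose b * Nat.factorial b * Nat.factorial k = Nat.factorial (k + b) := by
      have := Nat.choose_mul_factorial_mul_factorial (show b ≤ k + b by omega)
      simpa [Nat.add_sub_cancel] using this
    have e2 : (k + a + b).choose b * Nat.factorial b * Nat.factorial (k + a) =
        Nat.factorial (k + a + b) := by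
      have := Nat.choose_mul_factorial_mul_factorial (show b ≤ k + a + b by omega)
      simpa [Nat.add_sub_cancel] using this
    calc Nat.factorial (k + a) * Nat.factorial (k + b)
        = (k + b).choose b * Nat.factorial b * Nat.factorial k * Nat.factorial (k + a) := by
          rw [e1]; ring
      _ ≤ (k + a + b).choose b * Nat.factorial b * Nat.factorial k * Nat.factorial (k + a) := by
          gcongr
      _ = Nat.factorial k * ((k + a + b).choose b * Nat.factorial b * Nat.factorial (k + a)) := by
          ring
      _ = Nat.factorial k * Nat.factorial (k + a + b) := by rw [e2]
  calc (k + 1) * (Nat.factorial (k + a) * Nat.factorial (k + b))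
      ≤ (k + 1) * (Nat.factorial k * Nat.factorial (k + a + b)) := by gcongr
    _ ≤ (k + a + b + 1) * (Nat.factorial k * Nat.factorial (k + a + b)) := by gcongr; omega
    _ = Nat.factorial k * ((k + a + b + 1) * Nat.factorial (k + a + b)) := by ring
    _ = Nat.factorial k * Nat.factorial (k + a + b + 1) := by rw [← Nat.factorial_succ]

lemma c_key (k a b : ℕ) : (k + 1 : ℝ) * c k (a + b + 1) ≤ c k a * c k b := by
  rw [c, c, c, div_mul_div_comm, mul_div_assoc',
    div_le_div_iff₀ (by positivity) (by positivity)]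
  have := fact_key k a b
  have h2 : ((k:ℝ) + 1) * (Nat.factorial (k + a) * Nat.factorial (k + b)) ≤
      Nat.factorial k * Nat.factorial (k + a + b + 1) := by exact_mod_cast this
  calc ((k:ℝ) + 1) * Nat.factorial k * (Nat.factorial (k + a) * Nat.factorial (k + b))
      = Nat.factorial k * (((k:ℝ)+1) * (Nat.factorial (k + a) * Nat.factorial (k + b))) := by ring
    _ ≤ Nat.factorial k * (Nat.factorial k * Nat.factorial (k + a + b + 1)) := by
        have h0 : (0:ℝ) ≤ Nat.factorial k := by positivity
        exact mul_le_mul_of_nonneg_left h2 h0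
    _ = Nat.factorial k * Nat.factorial k * Nat.factorial (k + (a + b + 1)) := by
        rw [show k + (a + b + 1) = k + a + b + 1 by omega]; ring

lemma summable_S (k : ℕ) {l : ℝ} (hl : 0 ≤ l) : Summable fun j => c k j * l ^ j := by
  refine Summable.of_nonneg_of_le (fun j => by have := c_pos k j; positivity)
    (fun j => ?_) (Real.summable_pow_div_factorial l)
  calc c k j * l ^ j ≤ (1 / Nat.factorial j) * l ^ j := by
        exact mul_le_mul_of_nonneg_right (c_le k j) (pow_nonneg hl j)
    _ = l ^ j / Nat.factorial j := by ring

lemma one_le_S (k : ℕ) {l : ℝ} (hl : 0 ≤ l) : 1 ≤ S k l := by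
  have h := Summable.le_tsum (summable_S k hl) 0
    (fun j _ => by have := c_pos k j; positivity)
  simpa [c_zero, S] using h

lemma S_pos (k : ℕ) {l : ℝ} (hl : 0 ≤ l) : 0 < S k l :=
  lt_of_lt_of_le one_pos (one_le_S k hl)

lemma exp_eq (l : ℝ) : Real.exp l = ∑' i : ℕ, l ^ i / (Nat.factorial i) := by
  rw [Real.exp_eq_exp_ℝ, NormedSpace.exp_eq_tsum_div]

lemma pf_eq (t : ℕ) (l : ℝ) :
    pf t l = Real.exp (-l) * (Real.exp l - ∑ i ∈ range t, l ^ i / (Nat.factorial i)) := by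
  rw [pf]
  congr 1
  have hsum : Summable (fun i : ℕ => l ^ i / (Nat.factorial i)) :=
    Real.summable_pow_div_factorial l
  have hfin : Summable (fun i : ℕ => if i < t then l ^ i / (Nat.factorial i) else 0) :=
    summable_of_ne_finset_zero (s := range t) (fun i hi => by
      simp [Finset.mem_range] at hi; simp [hi])
  have h2 : (fun i : ℕ => if t ≤ i then l ^ i / (Nat.factorial i) else 0) =
      fun i => l ^ i / (Nat.factorial i) - (if i < t then l ^ i / (Nat.factorial i) else 0) := by
    funext i
    by_cases h : t ≤ i
    · simp [h, Nat.not_lt.mpr h]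
    · simp [h, Nat.lt_of_not_le h]
  rw [h2, Summable.tsum_sub hsum hfin, ← exp_eq]
  have h5 : (∑' (b : ℕ), if b < t then l ^ b / (Nat.factorial b : ℝ) else 0) =
      ∑ i ∈ range t, (if i < t then l ^ i / (Nat.factorial i : ℝ) else 0) :=
    tsum_eq_sum (fun i hi => by
      rw [Finset.mem_range] at hi; simp [hi])
  rw [h5]
  congr 1
  exact Finset.sum_congr rfl fun i hi => by simp [Finset.mem_range.mp hi]

lemma E_eq (t : ℕ) (l : ℝ) :
    Real.exp l - ∑ i ∈ range t, l ^ i / (Nat.factorial i) =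
      l ^ t / (Nat.factorial t) * S t l := by
  have hsum : Summable (fun i : ℕ => l ^ i / (Nat.factorial i)) :=
    Real.summable_pow_div_factorial l
  have h1 := Summable.sum_add_tsum_nat_add (f := fun i : ℕ => l ^ i / (Nat.factorial i)) t hsum
  have h2 : Real.exp l - ∑ i ∈ range t, l ^ i / (Nat.factorial i) =
      ∑' i : ℕ, l ^ (i + t) / (Nat.factorial (i + t)) := by
    rw [exp_eq]; linarith [h1]
  rw [h2, S, ← tsum_mul_left]
  refine tsum_congr fun i => ?_
  rw [c, add_comm i t]
  have h3 : (Nat.factorial t : ℝ) ≠ 0 := by positivity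
  have h4 : (Nat.factorial (t + i) : ℝ) ≠ 0 := by positivity
  field_simp
  ring

lemma pf_S (t : ℕ) (l : ℝ) :
    pf t l = Real.exp (-l) * (l ^ t / (Nat.factorial t) * S t l) := by
  rw [pf_eq, E_eq]

lemma pf_pos (t : ℕ) {l : ℝ} (hl : 0 < l) : 0 < pf t l := by
  rw [pf_S]
  have hS : 0 < S t l := S_pos t hl.le
  positivity

lemma continuous_pf (t : ℕ) : Continuous fun l => pf t l := by
  have : (fun l => pf t l) =
      fun l => Real.exp (-l) * (Real.exp l - ∑ i ∈ range t, l ^ i / (Nat.factorial i)) :=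
    funext (pf_eq t)
  rw [this]
  have hs : Continuous fun l : ℝ => ∑ i ∈ range t, l ^ i / (Nat.factorial i) :=
    continuous_finset_sum _ fun i _ => by continuity
  continuity

lemma key_ineq (k : ℕ) {x y : ℝ} (hx : 0 < x) (hxy : x < y) :
    (k + 1 : ℝ) * (S k y - S k x) ≤ (y - x) * (S k x * S k y) := by
  have hy : (0:ℝ) < y := hx.trans hxy
  have hsx := summable_S k hx.le
  have hsy := summable_S k hy.le
  set G : ℕ → ℝ := fun j => ∑ i ∈ range j, y ^ i * x ^ (j - 1 - i) with hG
  have hdiff : ∀ j, c k j * y ^ j - c k j * x ^ j = (y - x) * (c k j * G j) := by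
    intro j
    have h := geom_sum₂_mul y x j
    calc c k j * y ^ j - c k j * x ^ j = c k j * (y ^ j - x ^ j) := by ring
      _ = c k j * (G j * (y - x)) := by rw [← h]
      _ = (y - x) * (c k j * G j) := by ring
  have hsumG : Summable fun j => c k j * G j := by
    have hne : y - x ≠ 0 := sub_ne_zero.mpr hxy.ne'
    have : (fun j => c k j * G j) =
        fun j => (c k j * y ^ j - c k j * x ^ j) * (y - x)⁻¹ := by
      funext j
      rw [hdiff j]
      field_simp
    rw [this]
    exact (hsy.sub hsx).mul_right _
  have hsub : S k y - S k x = (y - x) * ∑' j, c k j * G j := by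
    rw [S, S, ← Summable.tsum_sub hsy hsx, ← tsum_mul_left]
    exact tsum_congr hdiff
  have hnx : Summable fun j => ‖c k j * x ^ j‖ := by
    simp only [Real.norm_eq_abs]; exact hsx.abs
  have hny : Summable fun j => ‖c k j * y ^ j‖ := by
    simp only [Real.norm_eq_abs]; exact hsy.abs
  have hprod : S k y * S k x =
      ∑' n, ∑ i ∈ range (n + 1), (c k i * y ^ i) * (c k (n - i) * x ^ (n - i)) :=
    tsum_mul_tsum_eq_tsum_sum_range_of_summable_norm hny hnx
  have hsumP : Summable fun n =>
      ∑ i ∈ range (n + 1), (c k i * y ^ i) * (c k (n - i) * x ^ (n - i)) :=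
    (summable_norm_sum_mul_range_of_summable_norm hny hnx).of_norm
  have hterm : ∀ n, (k + 1 : ℝ) * (c k (n + 1) * G (n + 1)) ≤
      ∑ i ∈ range (n + 1), (c k i * y ^ i) * (c k (n - i) * x ^ (n - i)) := by
    intro n
    have hGn : G (n + 1) = ∑ i ∈ range (n + 1), y ^ i * x ^ (n - i) := by
      rw [hG]; simp
    rw [hGn, Finset.mul_sum, Finset.mul_sum]
    refine Finset.sum_le_sum fun i hi => ?_
    have hin : i ≤ n := Nat.lt_succ_iff.mp (Finset.mem_range.mp hi)
    have hc := c_key k i (n - i)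
    rw [show i + (n - i) + 1 = n + 1 by omega] at hc
    calc (k + 1 : ℝ) * (c k (n + 1) * (y ^ i * x ^ (n - i)))
        = ((k + 1 : ℝ) * c k (n + 1)) * (y ^ i * x ^ (n - i)) := by ring
      _ ≤ (c k i * c k (n - i)) * (y ^ i * x ^ (n - i)) := by
          refine mul_le_mul_of_nonneg_right hc ?_
          positivity
      _ = (c k i * y ^ i) * (c k (n - i) * x ^ (n - i)) := by ring
  have hT : (k + 1 : ℝ) * ∑' j, c k j * G j ≤ S k x * S k y := by
    rw [← tsum_mul_left]
    have hshift : ∑' j, (k + 1 : ℝ) * (c k j * G j) =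
        ∑' n, (k + 1 : ℝ) * (c k (n + 1) * G (n + 1)) := by
      rw [Summable.tsum_eq_zero_add (hsumG.mul_left _)]
      simp [hG]
    rw [hshift, mul_comm (S k x)]
    rw [hprod]
    exact Summable.tsum_le_tsum hterm ((summable_nat_add_iff 1).mpr (hsumG.mul_left _)) hsumP
  calc (k + 1 : ℝ) * (S k y - S k x)
      = (y - x) * ((k + 1 : ℝ) * ∑' j, c k j * G j) := by rw [hsub]; ring
    _ ≤ (y - x) * (S k x * S k y) := by
        refine mul_le_mul_of_nonneg_left hT (by linarith)

set_option maxHeartbeats 1000000 in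
lemma S_gt (k : ℕ) {l : ℝ} (hl : 0 < l) : (k : ℝ) * (S k l - 1) < l * S k l := by
  have hs := summable_S k hl.le
  have hshift : S k l = 1 + ∑' n, c k (n + 1) * l ^ (n + 1) := by
    rw [S, Summable.tsum_eq_zero_add hs, c_zero, pow_zero, mul_one]
  have hssucc : Summable fun n => c k (n + 1) * l ^ (n + 1) :=
    (summable_nat_add_iff 1).mpr hs
  have hR : 0 < ∑' n, c k (n + 1) * l ^ (n + 1) := by
    have h0 : c k 1 * l ^ 1 ≤ ∑' n, c k (n + 1) * l ^ (n + 1) :=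
      Summable.le_tsum hssucc 0 (fun j _ => by have := c_pos k (j + 1); positivity)
    have : 0 < c k 1 * l ^ 1 := by have := c_pos k 1; positivity
    linarith
  have hls : l * S k l = ∑' n, c k n * l ^ (n + 1) := by
    rw [S, ← tsum_mul_left]
    exact tsum_congr fun n => by ring
  have hs2 : Summable fun n => c k n * l ^ (n + 1) := by
    have h := hs.mul_right l
    exact h.congr fun n => by ring
  have hle : (k + 1 : ℝ) * ∑' n, c k (n + 1) * l ^ (n + 1) ≤ l * S k l := by
    rw [hls, ← tsum_mul_left]
    refine Summable.tsum_le_tsum (fun n => ?_) (hssucc.mul_left _) hs2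
    have hc := c_key k n 0
    rw [show n + 0 + 1 = n + 1 by omega, c_zero, mul_one] at hc
    calc (k + 1 : ℝ) * (c k (n + 1) * l ^ (n + 1))
        = ((k + 1 : ℝ) * c k (n + 1)) * l ^ (n + 1) := by ring
      _ ≤ c k n * l ^ (n + 1) := mul_le_mul_of_nonneg_right hc (by positivity)
  nlinarith [hshift, hR, hle]

lemma g_eq {k : ℕ} (hk : 1 ≤ k) {l : ℝ} (hl : 0 < l) :
    l * pf (k - 1) l / pf k l = l + (k : ℝ) / S k l := by
  obtain ⟨m, rfl⟩ : ∃ m, k = m + 1 := ⟨k - 1, by omega⟩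
  have hm : m + 1 - 1 = m := rfl
  rw [hm]
  have hA : 0 < pf (m + 1) l := pf_pos _ hl
  have h1 : pf m l = pf (m + 1) l + Real.exp (-l) * (l ^ m / Nat.factorial m) := by
    rw [pf_eq, pf_eq, Finset.sum_range_succ]
    ring
  have h2 := pf_S (m + 1) l
  have hS : 0 < S (m + 1) l := S_pos _ hl.le
  have hexp : Real.exp (-l) ≠ 0 := (Real.exp_pos _).ne'
  have hfm : (Nat.factorial m : ℝ) ≠ 0 := by positivity
  have hfc : (Nat.factorial (m + 1) : ℝ) = (m + 1) * Nat.factorial m := by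
    push_cast [Nat.factorial_succ]; ring
  rw [h1, h2]
  have hfs : (Nat.factorial (m + 1) : ℝ) ≠ 0 := by positivity
  have hps : l ^ (m + 1) = l ^ m * l := pow_succ l m
  field_simp
  rw [hfc, hps]
  push_cast
  ring

end Stmt3Aux

open Stmt3Aux in
theorem stmt3 (k : ℕ) (hk : 1 ≤ k) :
    StrictMonoOn (fun l : ℝ => l * pf (k - 1) l / pf k l) (Set.Ioi 0) ∧
    Set.BijOn (fun l : ℝ => l * pf (k - 1) l / pf k l) (Set.Ioi 0) (Set.Ioi (k : ℝ)) := by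
  set g : ℝ → ℝ := fun l => l * pf (k - 1) l / pf k l with hg
  have hmono : StrictMonoOn g (Set.Ioi 0) := by
    intro x hx y hy hxy
    rw [Set.mem_Ioi] at hx hy
    simp only [hg]
    rw [g_eq hk hx, g_eq hk hy]
    have hSx := S_pos k hx.le
    have hSy := S_pos k hy.le
    have hkey := key_ineq k hx hxy
    have hP : 0 < S k x * S k y := mul_pos hSx hSy
    have hR : 0 < (y - x) * (S k x * S k y) := mul_pos (by linarith) hP
    have hk0 : (0:ℝ) ≤ (k : ℝ) := Nat.cast_nonneg k
    have hkey' := mul_le_mul_of_nonneg_left hkey hk0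
    have h2 : (k : ℝ) * (S k y - S k x) < (y - x) * (S k x * S k y) := by
      nlinarith [hkey', hR]
    have h3 : (k : ℝ) / S k x - (k : ℝ) / S k y = (k : ℝ) * (S k y - S k x) / (S k x * S k y) := by
      field_simp
    have h4 : (k : ℝ) * (S k y - S k x) / (S k x * S k y) < y - x :=
      (div_lt_iff₀ hP).mpr (by linarith)
    linarith [h3, h4]
  refine ⟨hmono, ?_, hmono.injOn, ?_⟩
  · intro l hl
    rw [Set.mem_Ioi] at hl ⊢
    simp only [hg]
    rw [g_eq hk hl]
    have hS := S_pos k hl.le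
    have h1 := S_gt k hl
    rw [show l + (k:ℝ) / S k l = (l * S k l + k) / S k l by field_simp, lt_div_iff₀ hS]
    linarith
  · intro t ht
    rw [Set.mem_Ioi] at ht
    have hk1 : (1:ℝ) ≤ (k:ℝ) := by exact_mod_cast hk
    set a : ℝ := (t - k) / 2 with ha'
    have ha : 0 < a := by rw [ha']; linarith
    have hat : 0 < t := by linarith
    have hab : a ≤ t := by rw [ha']; linarith
    have hga : g a ≤ t := by
      simp only [hg]
      rw [g_eq hk ha]
      have hS := one_le_S k ha.le
      have : (k:ℝ) / S k a ≤ k := by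
        apply div_le_self (Nat.cast_nonneg k) hS
      rw [ha'] at this ⊢
      linarith
    have hgb : t ≤ g t := by
      simp only [hg]
      rw [g_eq hk hat]
      have hS := S_pos k hat.le
      have : 0 ≤ (k:ℝ) / S k t := by positivity
      linarith
    have hcont : ContinuousOn g (Set.Icc a t) := by
      apply ContinuousOn.div
      · exact (continuous_id.mul (continuous_pf (k-1))).continuousOn
      · exact (continuous_pf k).continuousOn
      · intro l hl
        exact (pf_pos k (lt_of_lt_of_le ha hl.1)).ne'
    have := intermediate_value_Icc hab hcont
    obtain ⟨l, hl, hgl⟩ := this ⟨hga, hgb⟩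
    exact ⟨l, Set.mem_Ioi.mpr (lt_of_lt_of_le ha hl.1), hgl⟩
end

section
/- For any fixed integer k ≥ 2, the function ψ(x) = e^{-λ(x)} λ(x)^{k-1} / (f_{k-1}(λ(x)) (k-1)!), where λ(x) is the unique root of λ f_{k-1}(λ) = x f_k(λ), is strictly decreasing on (k, ∞). -/
open MeasureTheory Filter Finset

noncomputable def gg (t : ℕ) (l : ℝ) : ℝ :=
  ∑' j : ℕ, l ^ j * (t.factorial : ℝ) / ((t + j).factorial : ℝ)

lemma fac_le (t j : ℕ) : (t.factorial : ℝ) / ((t + j).factorial : ℝ) ≤ 1 / (j.factorial : ℝ) := by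
  rw [div_le_div_iff₀ (by positivity) (by positivity), one_mul]
  exact_mod_cast Nat.le_of_dvd (Nat.factorial_pos _)
    (Nat.factorial_mul_factorial_dvd_factorial_add t j)

lemma gg_summable (t : ℕ) {l : ℝ} (hl : 0 ≤ l) :
    Summable (fun j : ℕ => l ^ j * (t.factorial : ℝ) / ((t + j).factorial : ℝ)) := by
  apply Summable.of_nonneg_of_le (fun j => by positivity) (fun j => ?_)
    (Real.summable_pow_div_factorial l)
  rw [mul_div_assoc]
  calc l ^ j * ((t.factorial : ℝ) / ((t + j).factorial : ℝ))
      ≤ l ^ j * (1 / (j.factorial : ℝ)) :=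
        mul_le_mul_of_nonneg_left (fac_le t j) (by positivity)
    _ = l ^ j / (j.factorial : ℝ) := by ring

lemma one_le_gg (t : ℕ) {l : ℝ} (hl : 0 ≤ l) : 1 ≤ gg t l := by
  have h := Summable.le_tsum (gg_summable t hl) 0 (fun j _ => by positivity)
  simp only [pow_zero, one_mul, Nat.add_zero] at h
  rw [div_self (by positivity)] at h
  exact h

lemma gg_pos (t : ℕ) {l : ℝ} (hl : 0 ≤ l) : 0 < gg t l :=
  lt_of_lt_of_le one_pos (one_le_gg t hl)

lemma gg_strictmono (t : ℕ) {a b : ℝ} (ha : 0 ≤ a) (hab : a < b) : gg t a < gg t b := by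
  have hb : (0:ℝ) ≤ b := le_of_lt (lt_of_le_of_lt ha hab)
  refine Summable.tsum_lt_tsum (i := 1) (fun j => ?_) ?_ (gg_summable t ha) (gg_summable t hb)
  · have h : a ^ j ≤ b ^ j := pow_le_pow_left₀ ha hab.le j
    exact div_le_div_of_nonneg_right (mul_le_mul_of_nonneg_right h (by positivity)) (by positivity)
  · have h1 : (0:ℝ) < (t.factorial : ℝ) := by positivity
    have h2 : (0:ℝ) < ((t+1).factorial : ℝ) := by positivity
    rw [div_lt_div_iff₀ h2 h2, pow_one, pow_one]
    nlinarith [mul_pos h1 h2, mul_lt_mul_of_pos_right hab (mul_pos h1 h2)]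

lemma ite_summable (t : ℕ) {l : ℝ} (hl : 0 ≤ l) :
    Summable (fun i : ℕ => if t ≤ i then l ^ i / (i.factorial : ℝ) else 0) := by
  apply Summable.of_nonneg_of_le (fun i => by positivity) (fun i => ?_)
    (Real.summable_pow_div_factorial l)
  split
  · exact le_refl _
  · positivity

lemma pf_eq (t : ℕ) {l : ℝ} (hl : 0 ≤ l) :
    pf t l = Real.exp (-l) * (l ^ t / (t.factorial : ℝ) * gg t l) := by
  unfold pf gg
  congr 1
  have hs := ite_summable t hl
  rw [← Summable.sum_add_tsum_nat_add t hs]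
  have h0 : (∑ i ∈ range t, (if t ≤ i then l ^ i / (i.factorial:ℝ) else 0)) = 0 := by
    apply Finset.sum_eq_zero
    intro i hi
    rw [if_neg (by simpa using Nat.not_le.mpr (Finset.mem_range.mp hi))]
  rw [h0, zero_add, ← tsum_mul_left]
  apply tsum_congr; intro j
  rw [if_pos (by omega : t ≤ j + t), show j + t = t + j from Nat.add_comm j t, pow_add]
  have h1 : ((t+j).factorial : ℝ) ≠ 0 := by positivity
  have h2 : ((t).factorial : ℝ) ≠ 0 := by positivity
  field_simp

lemma natfac_cross (t i j : ℕ) (hij : j ≤ i) :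
    (t+i).factorial * (t+1+j).factorial ≤ (t+j).factorial * (t+1+i).factorial := by
  rw [show t+1+j = (t+j)+1 from by omega, show t+1+i = (t+i)+1 from by omega,
    Nat.factorial_succ, Nat.factorial_succ]
  calc (t+i).factorial * ((t+j+1) * (t+j).factorial)
      = (t+j+1) * ((t+i).factorial * (t+j).factorial) := by ring
    _ ≤ (t+i+1) * ((t+i).factorial * (t+j).factorial) :=
        Nat.mul_le_mul_right _ (by omega)
    _ = (t+j).factorial * ((t+i+1) * (t+i).factorial) := by ring

lemma coeff_cross (t i j : ℕ) (hij : j ≤ i) :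
    0 ≤ (t.factorial : ℝ) / ((t+i).factorial : ℝ) * (((t+1).factorial : ℝ) / ((t+1+j).factorial : ℝ))
      - (t.factorial : ℝ) / ((t+j).factorial : ℝ) * (((t+1).factorial : ℝ) / ((t+1+i).factorial : ℝ)) := by
  rw [sub_nonneg, div_mul_div_comm, div_mul_div_comm]
  apply div_le_div_of_nonneg_left (by positivity) (by positivity)
  exact_mod_cast natfac_cross t i j hij

lemma pow_cross {a b : ℝ} (hb : 0 ≤ b) (hba : b ≤ a) (i j : ℕ) (hij : j ≤ i) :
    0 ≤ a ^ i * b ^ j - a ^ j * b ^ i := by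
  have ha : 0 ≤ a := hb.trans hba
  obtain ⟨m, rfl⟩ := Nat.exists_eq_add_of_le hij
  have hm : b ^ m ≤ a ^ m := pow_le_pow_left₀ hb hba m
  have expand : a^(j+m)*b^j - a^j*b^(j+m) = a^j*b^j*(a^m-b^m) := by
    rw [pow_add, pow_add]; ring
  rw [expand]
  exact mul_nonneg (mul_nonneg (pow_nonneg ha j) (pow_nonneg hb j)) (sub_nonneg.mpr hm)

lemma pair_le (t : ℕ) {a b : ℝ} (hb : 0 ≤ b) (hba : b ≤ a) (i j : ℕ) (hij : j ≤ i) :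
    b ^ i * (t.factorial:ℝ) / ((t+i).factorial:ℝ) * (a ^ j * ((t+1).factorial:ℝ) / ((t+1+j).factorial:ℝ))
    + b ^ j * (t.factorial:ℝ) / ((t+j).factorial:ℝ) * (a ^ i * ((t+1).factorial:ℝ) / ((t+1+i).factorial:ℝ))
    ≤ a ^ i * (t.factorial:ℝ) / ((t+i).factorial:ℝ) * (b ^ j * ((t+1).factorial:ℝ) / ((t+1+j).factorial:ℝ))
    + a ^ j * (t.factorial:ℝ) / ((t+j).factorial:ℝ) * (b ^ i * ((t+1).factorial:ℝ) / ((t+1+i).factorial:ℝ)) := by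
  have key := mul_nonneg (coeff_cross t i j hij) (pow_cross hb hba i j hij)
  have identity :
      a ^ i * (t.factorial:ℝ) / ((t+i).factorial:ℝ) * (b ^ j * ((t+1).factorial:ℝ) / ((t+1+j).factorial:ℝ))
      + a ^ j * (t.factorial:ℝ) / ((t+j).factorial:ℝ) * (b ^ i * ((t+1).factorial:ℝ) / ((t+1+i).factorial:ℝ))
      - (b ^ i * (t.factorial:ℝ) / ((t+i).factorial:ℝ) * (a ^ j * ((t+1).factorial:ℝ) / ((t+1+j).factorial:ℝ))
        + b ^ j * (t.factorial:ℝ) / ((t+j).factorial:ℝ) * (a ^ i * ((t+1).factorial:ℝ) / ((t+1+i).factorial:ℝ)))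
      = ((t.factorial : ℝ) / ((t+i).factorial : ℝ) * (((t+1).factorial : ℝ) / ((t+1+j).factorial : ℝ))
        - (t.factorial : ℝ) / ((t+j).factorial : ℝ) * (((t+1).factorial : ℝ) / ((t+1+i).factorial : ℝ)))
        * (a ^ i * b ^ j - a ^ j * b ^ i) := by ring
  linarith [identity, key]

set_option maxHeartbeats 1000000 in
lemma cross (t : ℕ) {a b : ℝ} (hb : 0 ≤ b) (hba : b ≤ a) :
    gg t b * gg (t+1) a ≤ gg t a * gg (t+1) b := by
  have ha : 0 ≤ a := hb.trans hba
  set fb : ℕ → ℝ := fun m => b ^ m * (t.factorial:ℝ) / ((t+m).factorial:ℝ) with hfb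
  set fa : ℕ → ℝ := fun m => a ^ m * (t.factorial:ℝ) / ((t+m).factorial:ℝ) with hfa
  set ga : ℕ → ℝ := fun m => a ^ m * ((t+1).factorial:ℝ) / ((t+1+m).factorial:ℝ) with hga
  set gb : ℕ → ℝ := fun m => b ^ m * ((t+1).factorial:ℝ) / ((t+1+m).factorial:ℝ) with hgb
  have sfb : Summable fb := gg_summable t hb
  have sfa : Summable fa := gg_summable t ha
  have sga : Summable ga := gg_summable (t+1) ha
  have sgb : Summable gb := gg_summable (t+1) hb
  have nfb : Summable (fun m => ‖fb m‖) :=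
    sfb.congr fun m => (Real.norm_of_nonneg (by simp only [hfb]; positivity)).symm
  have nfa : Summable (fun m => ‖fa m‖) :=
    sfa.congr fun m => (Real.norm_of_nonneg (by simp only [hfa]; positivity)).symm
  have nga : Summable (fun m => ‖ga m‖) :=
    sga.congr fun m => (Real.norm_of_nonneg (by simp only [hga]; positivity)).symm
  have ngb : Summable (fun m => ‖gb m‖) :=
    sgb.congr fun m => (Real.norm_of_nonneg (by simp only [hgb]; positivity)).symm
  have eF : gg t b * gg (t+1) a = ∑' z : ℕ × ℕ, fb z.1 * ga z.2 :=
    tsum_mul_tsum_of_summable_norm nfb nga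
  have eG : gg t a * gg (t+1) b = ∑' z : ℕ × ℕ, fa z.1 * gb z.2 :=
    tsum_mul_tsum_of_summable_norm nfa ngb
  have hFs : Summable (fun z : ℕ × ℕ => fb z.1 * ga z.2) :=
    summable_mul_of_summable_norm nfb nga
  have hGs : Summable (fun z : ℕ × ℕ => fa z.1 * gb z.2) :=
    summable_mul_of_summable_norm nfa ngb
  have hFsw : Summable (fun z : ℕ × ℕ => fb z.2 * ga z.1) :=
    ((Equiv.prodComm ℕ ℕ).summable_iff).mpr hFs
  have hGsw : Summable (fun z : ℕ × ℕ => fa z.2 * gb z.1) :=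
    ((Equiv.prodComm ℕ ℕ).summable_iff).mpr hGs
  have eFsw : ∑' z : ℕ × ℕ, fb z.2 * ga z.1 = ∑' z : ℕ × ℕ, fb z.1 * ga z.2 :=
    (Equiv.prodComm ℕ ℕ).tsum_eq (fun z => fb z.1 * ga z.2)
  have eGsw : ∑' z : ℕ × ℕ, fa z.2 * gb z.1 = ∑' z : ℕ × ℕ, fa z.1 * gb z.2 :=
    (Equiv.prodComm ℕ ℕ).tsum_eq (fun z => fa z.1 * gb z.2)
  have hpt : ∀ z : ℕ × ℕ, fb z.1 * ga z.2 + fb z.2 * ga z.1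
      ≤ fa z.1 * gb z.2 + fa z.2 * gb z.1 := by
    rintro ⟨i, j⟩
    rcases le_total j i with hij | hij
    · exact pair_le t hb hba i j hij
    · have := pair_le t hb hba j i hij
      dsimp only [hfb, hfa, hga, hgb]
      linarith [this]
  have hsum : (∑' z : ℕ × ℕ, (fb z.1 * ga z.2 + fb z.2 * ga z.1))
      ≤ ∑' z : ℕ × ℕ, (fa z.1 * gb z.2 + fa z.2 * gb z.1) :=
    Summable.tsum_le_tsum hpt (hFs.add hFsw) (hGs.add hGsw)
  rw [Summable.tsum_add hFs hFsw, Summable.tsum_add hGs hGsw, eFsw, eGsw] at hsum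
  rw [eF, eG]
  linarith

lemma relation (k : ℕ) (hk : 2 ≤ k) {x a : ℝ} (ha : 0 < a)
    (heq : a * pf (k - 1) a = x * pf k a) :
    x * gg k a = (k : ℝ) * gg (k - 1) a := by
  obtain ⟨K, rfl⟩ : ∃ K, k = K + 1 := ⟨k - 1, by omega⟩
  simp only [Nat.add_sub_cancel] at heq ⊢
  rw [pf_eq K ha.le, pf_eq (K+1) ha.le] at heq
  have hexp : Real.exp (-a) ≠ 0 := Real.exp_ne_zero _
  have hKf : ((K).factorial : ℝ) ≠ 0 := by positivity
  have hK1f : (((K+1)).factorial : ℝ) ≠ 0 := by positivity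
  have hap : (0:ℝ) < a ^ (K+1) := pow_pos ha _
  have h1 : a * (a ^ K / (K.factorial:ℝ) * gg K a) = x * (a ^ (K+1) / ((K+1).factorial:ℝ) * gg (K+1) a) :=
    mul_left_cancel₀ hexp (by linarith [heq] <;> ring_nf)
  rw [Nat.factorial_succ] at h1
  push_cast at h1 ⊢
  have h2 : a ^ (K+1) ≠ 0 := ne_of_gt hap
  field_simp at h1
  rw [pow_succ] at h1
  refine mul_left_cancel₀ (show (a^K*a*(K.factorial:ℝ)) ≠ 0 by positivity) ?_
  linear_combination -(K.factorial:ℝ) * h1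

lemma psi_eq (k : ℕ) (hk : 2 ≤ k) {a : ℝ} (ha : 0 < a) :
    Real.exp (-a) * a ^ (k - 1) / (pf (k - 1) a * ((k-1).factorial : ℝ)) = 1 / gg (k - 1) a := by
  rw [pf_eq (k-1) ha.le]
  have h1 : ((k-1).factorial : ℝ) ≠ 0 := by positivity
  have h2 : Real.exp (-a) ≠ 0 := Real.exp_ne_zero _
  have h3 : a ^ (k-1) ≠ 0 := by positivity
  have h4 : gg (k-1) a ≠ 0 := ne_of_gt (gg_pos _ ha.le)
  field_simp

theorem stmt4 (k : ℕ) (hk : 2 ≤ k) (lam : ℝ → ℝ)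
    (hlam : ∀ x : ℝ, (k : ℝ) < x →
      0 < lam x ∧ lam x * pf (k - 1) (lam x) = x * pf k (lam x)) :
    StrictAntiOn
      (fun x : ℝ => Real.exp (-(lam x)) * (lam x) ^ (k - 1) /
        (pf (k - 1) (lam x) * (Nat.factorial (k - 1))))
      (Set.Ioi (k : ℝ)) := by
  intro x hx y hy hxy
  simp only [Set.mem_Ioi] at hx hy
  obtain ⟨hax, heqx⟩ := hlam x hx
  obtain ⟨hay, heqy⟩ := hlam y hy
  have relx := relation k hk hax heqx
  have rely := relation k hk hay heqy
  have hggx := gg_pos (k-1) hax.le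
  have hggy := gg_pos (k-1) hay.le
  simp only
  rw [psi_eq k hk hax, psi_eq k hk hay]
  rcases lt_or_ge (lam x) (lam y) with h | h
  · exact one_div_lt_one_div_of_lt hggx (gg_strictmono _ hax.le h)
  · exfalso
    have hc := cross (k-1) hay.le h
    rw [show k - 1 + 1 = k from by omega] at hc
    have hgkx := gg_pos k hax.le
    have hgky := gg_pos k hay.le
    have hkpos : (0:ℝ) ≤ (k:ℝ) := by positivity
    have h5 : (k:ℝ) * (gg (k-1) (lam y) * gg k (lam x)) ≤ (k:ℝ) * (gg (k-1) (lam x) * gg k (lam y)) :=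
      mul_le_mul_of_nonneg_left hc hkpos
    have chain : y * (gg k (lam y) * gg k (lam x)) ≤ x * (gg k (lam y) * gg k (lam x)) := by
      calc y * (gg k (lam y) * gg k (lam x)) = (y * gg k (lam y)) * gg k (lam x) := by ring
        _ = ((k:ℝ) * gg (k-1) (lam y)) * gg k (lam x) := by rw [rely]
        _ = (k:ℝ) * (gg (k-1) (lam y) * gg k (lam x)) := by ring
        _ ≤ (k:ℝ) * (gg (k-1) (lam x) * gg k (lam y)) := h5
        _ = ((k:ℝ) * gg (k-1) (lam x)) * gg k (lam y) := by ring
        _ = (x * gg k (lam x)) * gg k (lam y) := by rw [relx]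
        _ = x * (gg k (lam y) * gg k (lam x)) := by ring
    have hyx : y ≤ x := le_of_mul_le_mul_right chain (mul_pos hgky hgkx)
    linarith
end

section
/- For integers r ≥ 2, k ≥ 2 with (r,k) ≠ (2,2), the minimizer μ_{r,k} of h(μ) = μ/f_k(μ)^{r-1} is unique: h is strictly convex-like in the sense that h'(μ) = 0 has exactly one solution μ > 0. -/
open MeasureTheory Filter Finset

/-- Taylor polynomial of exp. -/
noncomputable def Pp (k : ℕ) (x : ℝ) : ℝ := ∑ i ∈ Finset.range k, x ^ i / (Nat.factorial i)

/-- normalized tail `∑ x^j/(j+k)!`. -/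
noncomputable def phi (k : ℕ) (x : ℝ) : ℝ := ∑' j : ℕ, x ^ j / (Nat.factorial (j + k))

lemma exp_tsum (x : ℝ) : Real.exp x = ∑' n : ℕ, x ^ n / n.factorial := by
  rw [Real.exp_eq_exp_ℝ, NormedSpace.exp_eq_tsum_div]

lemma fact_fact_le (j k : ℕ) : (j.factorial * k.factorial : ℝ) ≤ ((j + k).factorial : ℝ) := by
  exact_mod_cast Nat.le_of_dvd (Nat.factorial_pos _) (Nat.factorial_mul_factorial_dvd_factorial_add j k)

lemma summable_phi (k : ℕ) {x : ℝ} (hx : 0 ≤ x) :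
    Summable (fun j : ℕ => x ^ j / (Nat.factorial (j + k))) := by
  apply Summable.of_nonneg_of_le (fun j => by positivity)
    (fun j => ?_) (Real.summable_pow_div_factorial x)
  apply div_le_div_of_nonneg_left ?_ ?_ ?_
  · positivity
  · exact_mod_cast Nat.factorial_pos _
  · exact_mod_cast Nat.factorial_le (Nat.le_add_right j k)

lemma tail_eq (k : ℕ) (x : ℝ) : Real.exp x - Pp k x = x ^ k * phi k x := by
  have hs : Summable (fun n : ℕ => x ^ n / n.factorial) := Real.summable_pow_div_factorial x
  have h1 := Summable.sum_add_tsum_nat_add k hs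
  rw [exp_tsum x, ← h1, Pp]
  have : ∀ i : ℕ, x ^ (i + k) / ((i + k).factorial : ℝ) = x ^ k * (x ^ i / ((i + k).factorial : ℝ)) := by
    intro i; rw [pow_add]; ring
  simp only [this]
  rw [tsum_mul_left]
  unfold phi
  ring

lemma pf_eq_s18 (k : ℕ) (x : ℝ) : pf k x = 1 - Real.exp (-x) * Pp k x := by
  have hs : Summable (fun n : ℕ => x ^ n / n.factorial) := Real.summable_pow_div_factorial x
  have hfin : Summable (fun i : ℕ => if i < k then x ^ i / (i.factorial : ℝ) else 0) :=
    summable_of_ne_finset_zero (s := Finset.range k) (by intro i hi; simp [Finset.mem_range] at hi; simp [hi])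
  have key : ∀ i : ℕ, (if k ≤ i then x ^ i / (i.factorial : ℝ) else 0) =
      x ^ i / (i.factorial : ℝ) - (if i < k then x ^ i / (i.factorial : ℝ) else 0) := by
    intro i
    by_cases h : k ≤ i
    · simp [h, Nat.not_lt.mpr h]
    · simp [h, Nat.lt_of_not_le h]
  unfold pf
  simp only [key]
  rw [Summable.tsum_sub hs hfin, ← exp_tsum x]
  have : (∑' i : ℕ, if i < k then x ^ i / (i.factorial : ℝ) else 0) = Pp k x := by
    rw [tsum_eq_sum (s := Finset.range k) (by intro i hi; simp [Finset.mem_range] at hi; simp [hi])]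
    unfold Pp
    apply Finset.sum_congr rfl
    intro i hi
    simp [Finset.mem_range.mp hi]
  rw [this, mul_sub, ← Real.exp_add]
  simp

lemma Pp_hasDerivAt (k : ℕ) (x : ℝ) : HasDerivAt (Pp (k + 1)) (Pp k x) x := by
  induction k with
  | zero =>
    have e1 : Pp 1 = fun _ : ℝ => (1:ℝ) := by funext y; simp [Pp]
    have e0 : Pp 0 x = 0 := by simp [Pp]
    rw [e1, e0]
    exact hasDerivAt_const x (1:ℝ)
  | succ m ih =>
    have h2 : HasDerivAt (fun y : ℝ => y ^ (m + 1) / ((m + 1).factorial : ℝ))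
        (x ^ m / (m.factorial : ℝ)) x := by
      have := (hasDerivAt_pow (m + 1) x).div_const ((m + 1).factorial : ℝ)
      refine this.congr_deriv ?_
      rw [Nat.factorial_succ]
      push_cast
      field_simp
    have := ih.add h2
    have heq : (Pp (m + 1) + fun y : ℝ => y ^ (m + 1) / ((m + 1).factorial : ℝ)) = Pp (m + 2) := by
      funext y
      simp [Pp, Finset.sum_range_succ]
    rw [heq] at this
    refine this.congr_deriv ?_
    simp [Pp, Finset.sum_range_succ]

lemma pf_hasDerivAt (k : ℕ) (x : ℝ) :
    HasDerivAt (pf (k + 1)) (Real.exp (-x) * (x ^ k / (k.factorial : ℝ))) x := by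
  have h1 : HasDerivAt (fun y : ℝ => Real.exp (-y)) (-Real.exp (-x)) x := by
    exact ((Real.hasDerivAt_exp (-x)).comp x (hasDerivAt_neg x)).congr_deriv (by simp)
  have h2 := (h1.mul (Pp_hasDerivAt k x))
  have h3 := (hasDerivAt_const x (1 : ℝ)).sub h2
  have heq : ((fun _ : ℝ => (1 : ℝ)) - (fun y : ℝ => Real.exp (-y)) * Pp (k + 1)) = pf (k + 1) := by
    funext y; rw [pf_eq_s18]; rfl
  rw [heq] at h3
  refine h3.congr_deriv ?_
  have : Pp (k + 1) x - Pp k x = x ^ k / (k.factorial : ℝ) := by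
    simp [Pp, Finset.sum_range_succ]
  rw [← this]
  ring

lemma phi_pos (k : ℕ) {x : ℝ} (hx : 0 ≤ x) : 0 < phi k x := by
  have h0 : (0:ℝ) < (1 : ℝ) / ((0 + k).factorial : ℝ) := by positivity
  have := Summable.le_tsum (summable_phi k hx) 0 (fun j _ => by positivity)
  unfold phi
  calc (0:ℝ) < x ^ 0 / ((0 + k).factorial : ℝ) := by simpa using h0
  _ ≤ _ := this

lemma pf_pos (k : ℕ) {x : ℝ} (hx : 0 < x) : 0 < pf k x := by
  rw [pf_eq_s18]
  have h1 : Pp k x < Real.exp x := by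
    have := tail_eq k x
    nlinarith [phi_pos k hx.le, pow_pos hx k]
  have h2 : Real.exp (-x) * Pp k x < Real.exp (-x) * Real.exp x :=
    mul_lt_mul_of_pos_left h1 (Real.exp_pos _)
  rw [← Real.exp_add] at h2
  simp at h2
  linarith

lemma phi_strictMono (k : ℕ) {x y : ℝ} (hx : 0 ≤ x) (hxy : x < y) : phi k x < phi k y := by
  unfold phi
  apply Summable.tsum_lt_tsum_of_nonneg (i := 1)
  · intro j; positivity
  · intro j
    gcongr
  · gcongr
  · exact summable_phi k (hx.trans hxy.le)

lemma phi_le_exp (k : ℕ) {x : ℝ} (hx : 0 ≤ x) : phi k x ≤ Real.exp x / (k.factorial : ℝ) := by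
  have hsum : Summable (fun j : ℕ => x ^ j / (j.factorial : ℝ) / (k.factorial : ℝ)) :=
    (Real.summable_pow_div_factorial x).div_const _
  have hle : ∀ j : ℕ, x ^ j / (((j + k).factorial : ℕ) : ℝ) ≤ x ^ j / (j.factorial : ℝ) / (k.factorial : ℝ) := by
    intro j
    rw [div_div]
    exact div_le_div_of_nonneg_left (by positivity) (by positivity) (fact_fact_le j k)
  calc phi k x ≤ ∑' j : ℕ, x ^ j / (j.factorial : ℝ) / (k.factorial : ℝ) :=
        Summable.tsum_le_tsum hle (summable_phi k hx) hsum
    _ = (∑' j : ℕ, x ^ j / (j.factorial : ℝ)) / (k.factorial : ℝ) := by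
        rw [tsum_div_const]
    _ = Real.exp x / (k.factorial : ℝ) := by rw [← exp_tsum]

-- key equivalence
lemma deriv_zero_iff (p m : ℕ) {μ : ℝ} (hμ : 0 < μ) :
    deriv (fun x : ℝ => x / (pf (m + 1) x) ^ (p + 1)) μ = 0 ↔
      phi (m + 1) μ = (p + 1 : ℝ) / (m.factorial : ℝ) := by
  have hF : 0 < pf (m + 1) μ := pf_pos (m + 1) hμ
  have hm0 : (m.factorial : ℝ) ≠ 0 := by positivity
  have hd := pf_hasDerivAt m μ
  have hv := hd.pow (p + 1)
  simp only [Nat.add_sub_cancel] at hv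
  have hq := (hasDerivAt_id μ).div hv (pow_ne_zero (p + 1) hF.ne')
  have hqd := hq.deriv
  simp only [id_eq, Pi.pow_apply] at hqd
  rw [show (fun x : ℝ => x / (pf (m + 1) x) ^ (p + 1)) = id / pf (m + 1) ^ (p + 1) from rfl, hqd]
  have hsq : ((pf (m + 1) μ) ^ (p + 1)) ^ 2 ≠ 0 := pow_ne_zero 2 (pow_ne_zero _ hF.ne')
  rw [div_eq_zero_iff, or_iff_left hsq]
  have hE : Real.exp μ * Real.exp (-μ) = 1 := by
    rw [← Real.exp_add]; simp
  have htail := tail_eq (m + 1) μ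
  have hμk : μ ^ (m + 1) ≠ 0 := pow_ne_zero _ hμ.ne'
  have iff1 : (1 * pf (m + 1) μ ^ (p + 1) -
      μ * ((↑(p + 1) : ℝ) * pf (m + 1) μ ^ p * (Real.exp (-μ) * (μ ^ m / (m.factorial : ℝ)))) = 0) ↔
      pf (m + 1) μ = ((p : ℝ) + 1) * μ * (Real.exp (-μ) * (μ ^ m / (m.factorial : ℝ))) := by
    constructor
    · intro h
      have h1 : pf (m + 1) μ ^ p *
          (pf (m + 1) μ - ((p : ℝ) + 1) * μ * (Real.exp (-μ) * (μ ^ m / (m.factorial : ℝ)))) = 0 := by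
        push_cast at h
        linear_combination h
      have h2 := (mul_eq_zero.mp h1).resolve_left (pow_ne_zero p hF.ne')
      linarith [sub_eq_zero.mp h2]
    · intro h
      push_cast
      linear_combination pf (m + 1) μ ^ p * h
  rw [iff1, pf_eq_s18]
  constructor
  · intro h
    have key : μ ^ (m + 1) * phi (m + 1) μ = μ ^ (m + 1) * (((p : ℝ) + 1) / (m.factorial : ℝ)) := by
      rw [← htail]
      linear_combination Real.exp μ * h +
        (Pp (m + 1) μ + ((p : ℝ) + 1) * μ ^ (m + 1) / (m.factorial : ℝ)) * hE
    exact mul_left_cancel₀ hμk key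
  · intro h
    have key : Real.exp μ - Pp (m + 1) μ = μ ^ (m + 1) * (((p : ℝ) + 1) / (m.factorial : ℝ)) := by
      rw [htail, h]
    linear_combination Real.exp (-μ) * key - hE

theorem stmt18 (r k : ℕ) (hr : 2 ≤ r) (hk : 2 ≤ k) (hne : ¬(r = 2 ∧ k = 2)) :
    ∃! μ : ℝ, 0 < μ ∧ deriv (fun x : ℝ => x / (pf k x) ^ (r - 1)) μ = 0 := by
  obtain ⟨p, rfl⟩ : ∃ p, r = p + 2 := ⟨r - 2, by omega⟩
  obtain ⟨m, rfl⟩ : ∃ m, k = m + 2 := ⟨k - 2, by omega⟩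
  have hps : p + 2 - 1 = p + 1 := rfl
  have hderiv : ∀ {μ : ℝ}, 0 < μ →
      (deriv (fun x : ℝ => x / (pf (m + 2) x) ^ (p + 2 - 1)) μ = 0 ↔
        phi (m + 2) μ = (p + 1 : ℝ) / ((m + 1).factorial : ℝ)) := by
    intro μ hμ
    rw [hps]
    exact deriv_zero_iff p (m + 1) hμ
  set c : ℝ := (p + 1 : ℝ) / ((m + 1).factorial : ℝ) with hc
  -- existence via IVT
  set b : ℝ := ((p : ℝ) + 1) * ((m : ℝ) + 2) * ((m : ℝ) + 3) + 1 with hb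
  have hab : (1/2 : ℝ) ≤ b := by
    have h1 : (0:ℝ) ≤ (p : ℝ) := Nat.cast_nonneg p
    have h2 : (0:ℝ) ≤ (m : ℝ) := Nat.cast_nonneg m
    have h3 : (0:ℝ) ≤ ((p:ℝ) + 1) * ((m:ℝ) + 2) * ((m:ℝ) + 3) := by positivity
    rw [hb]
    linarith
  have hbpos : (0:ℝ) < b := by linarith
  have hψcont : ContinuousOn (fun x : ℝ => (Real.exp x - Pp (m + 2) x) / x ^ (m + 2))
      (Set.Icc (1/2 : ℝ) b) := by
    apply ContinuousOn.div
    · exact (Real.continuous_exp.sub (by unfold Pp; fun_prop)).continuousOn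
    · fun_prop
    · intro x hx
      have : (0:ℝ) < x := lt_of_lt_of_le (by norm_num) hx.1
      positivity
  have hψφ : ∀ x : ℝ, 0 < x → (Real.exp x - Pp (m + 2) x) / x ^ (m + 2) = phi (m + 2) x := by
    intro x hx
    rw [tail_eq (m + 2) x]
    field_simp
  have hfact_pos : (0:ℝ) < ((m + 1).factorial : ℝ) := by positivity
  have hfact2_pos : (0:ℝ) < ((m + 3).factorial : ℝ) := by positivity
  have hlow : phi (m + 2) (1/2 : ℝ) < c := by
    have h1 := phi_le_exp (m + 2) (by norm_num : (0:ℝ) ≤ 1/2)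
    have hexp : Real.exp (1/2 : ℝ) < 2 := by
      nlinarith [Real.exp_one_lt_d9, Real.exp_pos (1/2 : ℝ),
        Real.exp_add (1/2 : ℝ) (1/2 : ℝ), Real.exp_pos (1:ℝ)]
    have h2 : Real.exp (1/2 : ℝ) / ((m + 2).factorial : ℝ) < c := by
      rw [hc, div_lt_div_iff₀ (by positivity) hfact_pos]
      have hfs : ((m + 2).factorial : ℝ) = ((m : ℝ) + 2) * ((m + 1).factorial : ℝ) := by
        rw [Nat.factorial_succ]; push_cast; ring
      rw [hfs]
      have h3 : (0:ℝ) ≤ (m : ℝ) := Nat.cast_nonneg m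
      have h4 : (0:ℝ) ≤ (p : ℝ) := Nat.cast_nonneg p
      nlinarith
    linarith
  have hhigh : c < phi (m + 2) b := by
    have h1 : b / (((1 + (m + 2)).factorial : ℕ) : ℝ) ≤ phi (m + 2) b := by
      have := Summable.le_tsum (summable_phi (m + 2) hbpos.le) 1 (fun j _ => by positivity)
      calc b / (((1 + (m + 2)).factorial : ℕ) : ℝ)
          = b ^ 1 / (((1 + (m + 2)).factorial : ℕ) : ℝ) := by rw [pow_one]
        _ ≤ phi (m + 2) b := this
    have h2 : c < b / (((1 + (m + 2)).factorial : ℕ) : ℝ) := by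
      have hfs : (((1 + (m + 2)).factorial : ℕ) : ℝ) =
          ((m : ℝ) + 3) * ((m : ℝ) + 2) * ((m + 1).factorial : ℝ) := by
        have : 1 + (m + 2) = (m + 2) + 1 := by omega
        rw [this, Nat.factorial_succ, Nat.factorial_succ]
        push_cast; ring
      rw [hc, hfs, div_lt_div_iff₀ hfact_pos (by positivity)]
      have h3 : (0:ℝ) ≤ (m : ℝ) := Nat.cast_nonneg m
      have h4 : (0:ℝ) ≤ (p : ℝ) := Nat.cast_nonneg p
      nlinarith
    linarith
  -- IVT
  have hIVT := intermediate_value_Icc hab hψcont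
  have hcmem : c ∈ Set.Icc ((Real.exp (1/2:ℝ) - Pp (m + 2) (1/2:ℝ)) / (1/2:ℝ) ^ (m + 2))
      ((Real.exp b - Pp (m + 2) b) / b ^ (m + 2)) := by
    constructor
    · rw [hψφ (1/2 : ℝ) (by norm_num)]; exact hlow.le
    · rw [hψφ b hbpos]; exact hhigh.le
  obtain ⟨μ, hμmem, hμeq⟩ := hIVT hcmem
  have hμpos : 0 < μ := lt_of_lt_of_le (by norm_num) hμmem.1
  have hμphi : phi (m + 2) μ = c := by rw [← hψφ μ hμpos]; exact hμeq
  refine ⟨μ, ⟨hμpos, (hderiv hμpos).mpr hμphi⟩, ?_⟩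
  rintro y ⟨hy, hyd⟩
  have hyphi : phi (m + 2) y = c := (hderiv hy).mp hyd
  rcases lt_trichotomy y μ with h | h | h
  · have := phi_strictMono (m + 2) hy.le h
    rw [hyphi, hμphi] at this
    exact absurd this (lt_irrefl c)
  · exact h
  · have := phi_strictMono (m + 2) hμpos.le h
    rw [hyphi, hμphi] at this
    exact absurd this (lt_irrefl c)
end
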